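/- Let t be a finite rooted ordered tree with vertices u_0 = root < u_1 < ... < u_{#t-1} listed in lexicographical order, let H_n(t) = |u_n| be the height process and D(t) the Lukasiewicz path defined by D_0(t)=0 and D_{n+1}(t) = D_n(t) + k_{u_n}(t) - 1, where k_u(t) is the number of children of u. Then for every 0 ≤ n < #t, H_n(t) = #{ 0 ≤ j < n : D_j(t) = min_{j ≤ k ≤ n} D_k(t) }. -/

import Mathlib

open scoped Classical

/-- A finite rooted ordered tree, encoded as a finite set of finite words of positive
integers: the root is the empty word, the set is closed under taking prefixes, and the
children of a vertex `u` present in the tree are exactly `u++[1], …, u++[k_u]`. -/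
structure OTree where
  verts : Finset (List ℕ)
  root_mem : ([] : List ℕ) ∈ verts
  snoc_mem : ∀ (u : List ℕ) (j : ℕ), u ++ [j] ∈ verts → u ∈ verts ∧ 1 ≤ j
  initial_seg : ∀ (u : List ℕ) (j k : ℕ), u ++ [k] ∈ verts → 1 ≤ j → j ≤ k →
      u ++ [j] ∈ verts

namespace OTree

/-- the number `k_u(t)` of children of the word `u` in the tree `t` -/
noncomputable def kids (t : OTree) (u : List ℕ) : ℕ :=
  (t.verts.filter fun v => u <+: v ∧ v.length = u.length + 1).card

/-- the `n`-th vertex of `t` in the lexicographical order (`u_n`) -/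
noncomputable def vtx (t : OTree) (n : ℕ) : List ℕ :=
  (t.verts.sort (· ≤ ·)).getD n []

/-- the height process of `t` : `H_n(t) = |u_n|` -/
noncomputable def H (t : OTree) (n : ℕ) : ℕ := (t.vtx n).length

/-- the Lukasiewicz path of `t` : `D_0(t)=0`, `D_{n+1}(t)=D_n(t)+k_{u_n}(t)-1` -/
noncomputable def D (t : OTree) (n : ℕ) : ℤ :=
  ∑ j ∈ Finset.range n, ((t.kids (t.vtx j) : ℤ) - 1)

end OTree

namespace OTreeAux

theorem appLe (u w : List ℕ) : u ≤ u ++ w := by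
  induction u with
  | nil => exact le_of_not_gt (List.not_lt_nil _)
  | cons a l ih => exact List.cons_le_cons a ih

theorem lexL1 {u v : List ℕ} (h : u <+: v) : u ≤ v := by
  obtain ⟨w, rfl⟩ := h; exact appLe u w

theorem lexL2 {u v : List ℕ} (h : u <+: v) (hne : u ≠ v) : u < v :=
  lt_of_le_of_ne (lexL1 h) hne

theorem lexL3 {a b : ℕ} (h : a < b) (q s t : List ℕ) : (q ++ a::s : List ℕ) < q ++ b::t := by
  induction q with
  | nil => exact List.Lex.rel h
  | cons x l ih => exact List.Lex.cons ih

theorem lexL5 {c d : ℕ} {p r : List ℕ} (h : (p ++ d::r : List ℕ) < p ++ [c]) : d < c := by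
  induction p with
  | nil =>
    cases h with
    | rel h => exact h
    | cons h => exact absurd h (List.not_lt_nil _)
  | cons x l ih =>
    cases h with
    | rel h => exact absurd h (lt_irrefl x)
    | cons h => exact ih h

theorem lexL4 {u v : List ℕ} (h : u ≤ v) :
    u <+: v ∨ ∃ q a b s t, u = q ++ a::s ∧ v = q ++ b::t ∧ a < b := by
  induction u generalizing v with
  | nil => exact Or.inl (List.nil_prefix)
  | cons a s ih =>
    match v with
    | [] => exact absurd (List.nil_lt_cons a s) (not_lt_of_ge h)
    | b :: t =>
      rcases lt_trichotomy a b with hab | rfl | hab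
      · exact Or.inr ⟨[], a, b, s, t, rfl, rfl, hab⟩
      · have hst : s ≤ t := by
          by_contra hc
          exact absurd (List.Lex.cons (lt_of_not_ge hc) : (a::t : List ℕ) < a::s) (not_lt_of_ge h)
        rcases ih hst with hp | ⟨q, x, y, s', t', rfl, rfl, hxy⟩
        · exact Or.inl ((List.prefix_cons_inj a |>.mpr hp))
        · exact Or.inr ⟨a::q, x, y, s', t', rfl, rfl, hxy⟩
      · exact absurd (List.Lex.rel hab : (b::t : List ℕ) < a::s) (not_lt_of_ge h)

end OTreeAux

namespace OTree
theorem length_sort (t : OTree) : (t.verts.sort (· ≤ ·)).length = t.verts.card :=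
  Finset.length_sort _

theorem vtx_eq_get (t : OTree) {n : ℕ} (hn : n < t.verts.card) :
    t.vtx n = (t.verts.sort (· ≤ ·)).get ⟨n, by rw [length_sort]; exact hn⟩ := by
  unfold vtx
  exact List.getD_eq_getElem _ _ _

theorem vtx_mem (t : OTree) {n : ℕ} (hn : n < t.verts.card) : t.vtx n ∈ t.verts := by
  rw [vtx_eq_get t hn]
  exact (Finset.mem_sort (α := List ℕ) (· ≤ ·)).1 (List.get_mem _ _)

theorem vtx_lt_vtx (t : OTree) {m n : ℕ} (h : m < n) (hn : n < t.verts.card) :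
    t.vtx m < t.vtx n := by
  rw [vtx_eq_get t (h.trans hn), vtx_eq_get t hn]
  exact (Finset.sortedLT_sort t.verts).strictMono_get (by simpa using h)

theorem vtx_inj (t : OTree) {m n : ℕ} (hm : m < t.verts.card) (hn : n < t.verts.card)
    (h : t.vtx m = t.vtx n) : m = n := by
  rcases lt_trichotomy m n with hc | hc | hc
  · exact absurd h (ne_of_lt (vtx_lt_vtx t hc hn))
  · exact hc
  · exact absurd h.symm (ne_of_lt (vtx_lt_vtx t hc hm))

theorem lt_of_vtx_lt (t : OTree) {m n : ℕ} (hm : m < t.verts.card) (hn : n < t.verts.card)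
    (h : t.vtx m < t.vtx n) : m < n := by
  by_contra hc
  rcases eq_or_lt_of_le (le_of_not_gt hc) with rfl | hc
  · exact absurd h (lt_irrefl _)
  · exact absurd (vtx_lt_vtx t hc hm) (asymm h)

theorem le_of_vtx_le (t : OTree) {m n : ℕ} (hm : m < t.verts.card) (hn : n < t.verts.card)
    (h : t.vtx m ≤ t.vtx n) : m ≤ n := by
  by_contra hc
  exact absurd (vtx_lt_vtx t (lt_of_not_ge hc) hm) (not_lt_of_ge h)

theorem exists_index (t : OTree) {v : List ℕ} (hv : v ∈ t.verts) :
    ∃ m, m < t.verts.card ∧ t.vtx m = v := by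
  have : v ∈ t.verts.sort (· ≤ ·) := (Finset.mem_sort _).2 hv
  obtain ⟨⟨m, hm⟩, hg⟩ := List.mem_iff_get.1 this
  exact ⟨m, by rw [← length_sort t]; exact hm, by rw [vtx_eq_get t (by rw [← length_sort t]; exact hm)]; exact hg⟩

theorem prefix_mem (t : OTree) {u p : List ℕ} (hu : u ∈ t.verts) (hp : p <+: u) :
    p ∈ t.verts := by
  induction u using List.reverseRecOn generalizing p with
  | nil => rw [List.prefix_nil.1 hp]; exact t.root_mem
  | append_singleton l a ih =>
    rcases List.prefix_concat_iff.1 hp with rfl | hp'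
    · exact hu
    · exact ih (t.snoc_mem l a hu).1 hp'

noncomputable def chl (t : OTree) (u : List ℕ) : Finset (List ℕ) :=
  t.verts.filter fun v => u <+: v ∧ v.length = u.length + 1

theorem kids_eq (t : OTree) (u : List ℕ) : t.kids u = (chl t u).card := rfl

theorem mem_chl {t : OTree} {u v : List ℕ} :
    v ∈ chl t u ↔ v ∈ t.verts ∧ ∃ c, v = u ++ [c] := by
  unfold chl
  rw [Finset.mem_filter]
  constructor
  · rintro ⟨hv, ⟨w, rfl⟩, hl⟩
    refine ⟨hv, ?_⟩
    rw [List.length_append] at hl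
    have hw : w.length = 1 := by omega
    obtain ⟨c, rfl⟩ := List.length_eq_one_iff.1 hw
    exact ⟨c, rfl⟩
  · rintro ⟨hv, c, rfl⟩
    exact ⟨hv, ⟨⟨[c], rfl⟩, by simp⟩⟩

noncomputable def Sw (t : OTree) (u : List ℕ) : Finset (List ℕ) :=
  t.verts.filter fun v => (∃ p c, v = p ++ [c] ∧ p <+: u ∧ p ≠ u) ∧ u < v

theorem mem_Sw {t : OTree} {u v : List ℕ} :
    v ∈ Sw t u ↔ v ∈ t.verts ∧ (∃ p c, v = p ++ [c] ∧ p <+: u ∧ p ≠ u) ∧ u < v := by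
  unfold Sw; rw [Finset.mem_filter]

theorem vtx_zero (t : OTree) (h0 : 0 < t.verts.card) : t.vtx 0 = [] := by
  obtain ⟨m, hm, hv⟩ := t.exists_index t.root_mem
  rcases Nat.eq_zero_or_pos m with rfl | hmpos
  · exact hv
  · exact absurd (hv ▸ t.vtx_lt_vtx hmpos hm) (List.not_lt_nil _)

theorem sum_kids (t : OTree) {n : ℕ} (hn : n < t.verts.card) :
    ∑ j ∈ Finset.range n, t.kids (t.vtx j) = n + (Sw t (t.vtx n)).card := by
  have hdisj : ∀ j ∈ Finset.range n, ∀ j' ∈ Finset.range n, j ≠ j' →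
      Disjoint (chl t (t.vtx j)) (chl t (t.vtx j')) := by
    intro j hj j' hj' hne
    rw [Finset.mem_range] at hj hj'
    rw [Finset.disjoint_left]
    rintro v hv hv'
    obtain ⟨-, c, rfl⟩ := mem_chl.1 hv
    obtain ⟨-, c', he⟩ := mem_chl.1 hv'
    have : t.vtx j = t.vtx j' := by
      have := congrArg List.dropLast he
      rwa [List.dropLast_concat, List.dropLast_concat] at this
    exact hne (t.vtx_inj (hj.trans hn) (hj'.trans hn) this)
  have hbi : (Finset.range n).biUnion (fun j => chl t (t.vtx j)) =
      (Finset.Icc 1 n).image t.vtx ∪ Sw t (t.vtx n) := by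
    ext v
    rw [Finset.mem_biUnion, Finset.mem_union, Finset.mem_image]
    constructor
    · rintro ⟨j, hj, hv⟩
      rw [Finset.mem_range] at hj
      obtain ⟨hvm, c, rfl⟩ := mem_chl.1 hv
      obtain ⟨m, hm, hvm'⟩ := t.exists_index hvm
      have hjlt : t.vtx j < t.vtx j ++ [c] :=
        OTreeAux.lexL2 ⟨[c], rfl⟩ (by intro h; simpa using congrArg List.length h)
      have hjm : j < m := t.lt_of_vtx_lt (hj.trans hn) hm (hvm' ▸ hjlt)
      rcases le_or_gt m n with hmn | hmn
      · exact Or.inl ⟨m, Finset.mem_Icc.2 ⟨by omega, hmn⟩, hvm'⟩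
      · refine Or.inr (mem_Sw.2 ⟨hvm, ⟨t.vtx j, c, rfl, ?_, ?_⟩, ?_⟩)
        · -- vtx j <+: vtx n
          have hjn : t.vtx j ≤ t.vtx n := (t.vtx_lt_vtx hj hn).le
          rcases OTreeAux.lexL4 hjn with hp | ⟨q, a, b, s, tl, hq1, hq2, hab⟩
          · exact hp
          · exfalso
            have h1 : t.vtx j ++ [c] < t.vtx n := by
              rw [hq1, hq2, List.append_assoc]
              exact OTreeAux.lexL3 hab q (s ++ [c]) tl
            have h2 : t.vtx n < t.vtx j ++ [c] := hvm' ▸ t.vtx_lt_vtx hmn hm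
            exact absurd h1 (asymm h2)
        · exact fun h => absurd (h ▸ t.vtx_lt_vtx hj hn) (lt_irrefl _)
        · exact hvm' ▸ t.vtx_lt_vtx hmn hm
    · rintro (⟨m, hm, rfl⟩ | hv)
      · rw [Finset.mem_Icc] at hm
        have hmc : m < t.verts.card := lt_of_le_of_lt hm.2 hn
        have hne : t.vtx m ≠ [] := by
          rw [← vtx_zero t (Nat.zero_lt_of_lt hn)]
          intro h
          have := t.vtx_inj hmc (Nat.zero_lt_of_lt hn) h
          omega
        set v := t.vtx m with hvdef
        have hsplit : v.dropLast ++ [v.getLast hne] = v := List.dropLast_append_getLast hne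
        have hpv : v.dropLast ∈ t.verts := by
          refine (t.snoc_mem v.dropLast (v.getLast hne) ?_).1
          rw [hsplit]; exact t.vtx_mem hmc
        obtain ⟨j, hj, hvj⟩ := t.exists_index hpv
        have hlt : t.vtx j < v := by
          rw [hvj]
          refine OTreeAux.lexL2 ⟨[v.getLast hne], hsplit⟩ ?_
          intro h
          have := congrArg List.length h
          rw [← hsplit, List.length_append] at this
          simp at this
        have hjm : j < m := t.lt_of_vtx_lt hj hmc hlt
        refine ⟨j, Finset.mem_range.2 (lt_of_lt_of_le hjm hm.2), mem_chl.2 ⟨t.vtx_mem hmc, v.getLast hne, ?_⟩⟩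
        rw [hvj, hsplit]
      · obtain ⟨hvm, ⟨p, c, rfl, hpre, hpne⟩, hlt⟩ := mem_Sw.1 hv
        have hpv : p ∈ t.verts := t.prefix_mem (t.vtx_mem hn) hpre
        obtain ⟨j, hj, hvj⟩ := t.exists_index hpv
        have hjn : j < n := by
          refine t.lt_of_vtx_lt hj hn ?_
          rw [hvj]; exact OTreeAux.lexL2 hpre hpne
        exact ⟨j, Finset.mem_range.2 hjn, mem_chl.2 ⟨hvm, c, by rw [hvj]⟩⟩
  have hdisj2 : Disjoint ((Finset.Icc 1 n).image t.vtx) (Sw t (t.vtx n)) := by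
    rw [Finset.disjoint_left]
    intro v hvA hvS
    obtain ⟨m, hm, rfl⟩ := Finset.mem_image.1 hvA
    rw [Finset.mem_Icc] at hm
    have h1 : t.vtx n < t.vtx m := (mem_Sw.1 hvS).2.2
    rcases eq_or_lt_of_le hm.2 with rfl | hmn
    · exact absurd h1 (lt_irrefl _)
    · exact absurd (t.vtx_lt_vtx hmn hn) (asymm h1)
  have hinj : Set.InjOn t.vtx (Finset.Icc 1 n) := by
    intro a ha b hb h
    rw [Finset.coe_Icc, Set.mem_Icc] at ha hb
    exact t.vtx_inj (lt_of_le_of_lt ha.2 hn) (lt_of_le_of_lt hb.2 hn) h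
  calc ∑ j ∈ Finset.range n, t.kids (t.vtx j)
      = ∑ j ∈ Finset.range n, (chl t (t.vtx j)).card := by
        simp only [kids_eq]
    _ = ((Finset.range n).biUnion (fun j => chl t (t.vtx j))).card :=
        (Finset.card_biUnion hdisj).symm
    _ = ((Finset.Icc 1 n).image t.vtx).card + (Sw t (t.vtx n)).card := by
        rw [hbi, Finset.card_union_of_disjoint hdisj2]
    _ = n + (Sw t (t.vtx n)).card := by
        rw [Finset.card_image_of_injOn hinj, Nat.card_Icc]; omega

theorem D_eq (t : OTree) {n : ℕ} (hn : n < t.verts.card) :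
    t.D n = ((Sw t (t.vtx n)).card : ℤ) := by
  unfold D
  rw [Finset.sum_sub_distrib, ← Nat.cast_sum, sum_kids t hn]
  push_cast
  simp

theorem Sw_mono (t : OTree) {u w : List ℕ} (h : u <+: w) : Sw t u ⊆ Sw t w := by
  intro v hv
  obtain ⟨hvm, ⟨p, c, rfl, hpre, hpne⟩, hlt⟩ := mem_Sw.1 hv
  obtain ⟨s, rfl⟩ := hpre
  match s, hpne, hlt with
  | [], hpne, _ => exact absurd (by simp) hpne
  | d :: r, _, hlt =>
    obtain ⟨e, rfl⟩ := h
    have hdc : d < c := OTreeAux.lexL5 hlt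
    refine mem_Sw.2 ⟨hvm, ⟨p, c, rfl, ⟨d :: r ++ e, by simp⟩, ?_⟩, ?_⟩
    · intro hh
      have := congrArg List.length hh
      simp at this
    · have : (p ++ d :: r) ++ e = p ++ d :: (r ++ e) := by simp
      rw [this]
      exact OTreeAux.lexL3 hdc p (r ++ e) []

theorem Sw_desc (t : OTree) {u w : List ℕ} (hw : w ∈ t.verts)
    (hlt : u < w) (hnp : ¬ u <+: w) :
    ∃ x ∈ t.verts, u < x ∧ x ≤ w ∧ (Sw t x).card < (Sw t u).card := by
  rcases OTreeAux.lexL4 hlt.le with hp | ⟨q, a, b, s, tl, rfl, rfl, hab⟩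
  · exact absurd hp hnp
  refine ⟨q ++ [a+1], ?_, ?_, ?_, ?_⟩
  · have hqb : q ++ [b] ∈ t.verts := t.prefix_mem hw ⟨tl, by simp⟩
    exact t.initial_seg q (a+1) b hqb (by omega) hab
  · exact OTreeAux.lexL3 (Nat.lt_succ_self a) q s []
  · rcases eq_or_lt_of_le (Nat.succ_le_of_lt hab) with heq | hlt2
    · exact OTreeAux.lexL1 ⟨tl, by subst heq; simp⟩
    · exact (OTreeAux.lexL3 hlt2 q [] tl).le
  · apply Finset.card_lt_card
    constructor
    · -- Sw (q++[a+1]) ⊆ Sw (q++a::s)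
      intro v hv
      obtain ⟨hvm, ⟨p, c, rfl, hpre, hpne⟩, hvlt⟩ := mem_Sw.1 hv
      have hplen : p.length ≤ q.length := by
        have h1 := hpre.length_le
        simp only [List.length_append, List.length_singleton] at h1
        rcases eq_or_lt_of_le h1 with heq | hlt2
        · exact absurd (hpre.eq_of_length_le (by simp only [List.length_append, List.length_singleton]; omega)) hpne
        · omega
      have hpq : p <+: q := List.prefix_of_prefix_length_le hpre (q.prefix_append [a+1]) hplen
      obtain ⟨r2, rfl⟩ := hpq
      match r2, hpre, hvlt with
      | [], _, hvlt =>
        have hvlt' : p ++ (a+1) :: [] < p ++ [c] := by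
          have he : (p ++ []) ++ [a+1] = p ++ (a+1) :: [] := by simp
          rwa [he] at hvlt
        have hac : a + 1 < c := OTreeAux.lexL5 hvlt'
        refine mem_Sw.2 ⟨hvm, ⟨p, c, rfl, ⟨a :: s, by simp⟩, ?_⟩, ?_⟩
        · intro hh; have := congrArg List.length hh; simp at this
        · have he : (p ++ []) ++ a :: s = p ++ a :: s := by simp
          rw [he]
          exact OTreeAux.lexL3 (by omega) p s []
      | d :: r2', _, hvlt =>
        have hvlt' : p ++ d :: (r2' ++ [a+1]) > p ++ [c] → False := fun h => absurd h (asymm (by simpa using hvlt))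
        have hdc : d < c := OTreeAux.lexL5 (by
          have : (p ++ d :: r2') ++ [a+1] = p ++ d :: (r2' ++ [a+1]) := by simp
          rwa [this] at hvlt)
        refine mem_Sw.2 ⟨hvm, ⟨p, c, rfl, ⟨d :: (r2' ++ a :: s), by simp⟩, ?_⟩, ?_⟩
        · intro hh; have := congrArg List.length hh; simp at this
        · have : (p ++ d :: r2') ++ a :: s = p ++ d :: (r2' ++ a :: s) := by simp
          rw [this]
          exact OTreeAux.lexL3 hdc p (r2' ++ a :: s) []
    · -- not superset: q++[a+1] ∈ Sw (q++a::s) \ Sw (q++[a+1])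
      intro hsup
      have hxmem : q ++ [a+1] ∈ Sw t (q ++ a :: s) := by
        refine mem_Sw.2 ⟨?_, ⟨q, a+1, rfl, ⟨a :: s, rfl⟩, ?_⟩, ?_⟩
        · have hqb : q ++ [b] ∈ t.verts := t.prefix_mem hw ⟨tl, by simp⟩
          exact t.initial_seg q (a+1) b hqb (by omega) hab
        · intro hh; have := congrArg List.length hh; simp at this
        · exact OTreeAux.lexL3 (Nat.lt_succ_self a) q s []
      have := (mem_Sw.1 (hsup hxmem)).2.2
      exact absurd this (lt_irrefl _)

end OTree


theorem height_eq_card_min_records (t : OTree) (n : ℕ) (hn : n < t.verts.card) :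
    t.H n =
      ((Finset.range n).filter fun j => ∀ k ∈ Finset.Icc j n, t.D j ≤ t.D k).card := by
  have hfilter : ((Finset.range n).filter fun j => ∀ k ∈ Finset.Icc j n, t.D j ≤ t.D k)
      = (Finset.range n).filter fun j => t.vtx j <+: t.vtx n ∧ t.vtx j ≠ t.vtx n := by
    apply Finset.filter_congr
    intro j hj
    rw [Finset.mem_range] at hj
    have hjc : j < t.verts.card := hj.trans hn
    have hne : t.vtx j ≠ t.vtx n := ne_of_lt (t.vtx_lt_vtx hj hn)
    constructor
    · intro hrec
      refine ⟨?_, hne⟩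
      by_contra hnp
      obtain ⟨x, hx, hlt, hle, hcard⟩ :=
        OTree.Sw_desc t (t.vtx_mem hn) (t.vtx_lt_vtx hj hn) hnp
      obtain ⟨k, hk, rfl⟩ := t.exists_index hx
      have hjk : j < k := t.lt_of_vtx_lt hjc hk hlt
      have hkn : k ≤ n := t.le_of_vtx_le hk hn hle
      have hDD := hrec k (Finset.mem_Icc.2 ⟨hjk.le, hkn⟩)
      rw [OTree.D_eq t hjc, OTree.D_eq t hk] at hDD
      exact absurd hcard (not_lt.2 (by exact_mod_cast hDD))
    · rintro ⟨hpre, -⟩ k hk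
      rw [Finset.mem_Icc] at hk
      have hkc : k < t.verts.card := lt_of_le_of_lt hk.2 hn
      have hjk : t.vtx j ≤ t.vtx k := by
        rcases eq_or_lt_of_le hk.1 with rfl | hlt
        · exact le_rfl
        · exact (t.vtx_lt_vtx hlt hkc).le
      have hpk : t.vtx j <+: t.vtx k := by
        rcases OTreeAux.lexL4 hjk with hp | ⟨q, a, b, s, tl, hq1, hq2, hab⟩
        · exact hp
        · exfalso
          obtain ⟨e, he⟩ := hpre
          have hkn : t.vtx k ≤ t.vtx n := by
            rcases eq_or_lt_of_le hk.2 with rfl | hlt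
            · exact le_rfl
            · exact (t.vtx_lt_vtx hlt hn).le
          have : t.vtx n < t.vtx k := by
            rw [← he, hq1, hq2, List.append_assoc]
            exact OTreeAux.lexL3 hab q (s ++ e) tl
          exact absurd hkn (not_le.2 this)
      rw [OTree.D_eq t hjc, OTree.D_eq t hkc]
      exact_mod_cast Finset.card_le_card (OTree.Sw_mono t hpk)
  rw [hfilter]
  have := Finset.card_bij
    (s := (Finset.range n).filter fun j => t.vtx j <+: t.vtx n ∧ t.vtx j ≠ t.vtx n)
    (t := Finset.range (t.vtx n).length)
    (fun j _ => (t.vtx j).length)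
    (by
      intro j hjm
      have h := Finset.mem_filter.1 hjm
      have hpre := h.2.1
      have hne := h.2.2
      rw [Finset.mem_range]
      rcases eq_or_lt_of_le hpre.length_le with heq | hlt
      · exact absurd (hpre.eq_of_length_le heq.ge) hne
      · exact hlt)
    (by
      intro j1 h1 j2 h2 hlen
      have hh1 := Finset.mem_filter.1 h1
      have hh2 := Finset.mem_filter.1 h2
      have hj1 := Finset.mem_range.1 hh1.1
      have hj2 := Finset.mem_range.1 hh2.1
      have hp1 := hh1.2.1
      have hp2 := hh2.2.1
      have heq : t.vtx j1 = t.vtx j2 :=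
        (List.prefix_of_prefix_length_le hp1 hp2 hlen.le).eq_of_length_le hlen.ge
      exact t.vtx_inj (hj1.trans hn) (hj2.trans hn) heq)
    (by
      intro b hb
      rw [Finset.mem_range] at hb
      have hpmem : (t.vtx n).take b ∈ t.verts :=
        t.prefix_mem (t.vtx_mem hn) (List.take_prefix b _)
      obtain ⟨j, hjc, hvj⟩ := t.exists_index hpmem
      have hlen : (t.vtx j).length = b := by
        rw [hvj, List.length_take]
        omega
      have hpre : t.vtx j <+: t.vtx n := hvj ▸ List.take_prefix b _
      have hne : t.vtx j ≠ t.vtx n := by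
        intro hh
        have := congrArg List.length hh
        omega
      have hjn : j < n := t.lt_of_vtx_lt hjc hn (OTreeAux.lexL2 hpre hne)
      exact ⟨j, Finset.mem_filter.2 ⟨Finset.mem_range.2 hjn, hpre, hne⟩, hlen⟩)
  rw [this, Finset.card_range]
  rfl
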